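/- If a vertex x is n-periodic from time T, i.e. u_{t+n}(x) = u_t(x) for all t ≥ T, and u_T(x) ≠ 0, then x advances at every step from time T onward: u_{t+1}(x) = u_t(x) + 1 for all t ≥ T. -/

import Mathlib

/- The Greenberg–Hastings update rule on a simple graph `G` with state space `ZMod n`:
`𝒢u(x) = u(x)+1` if `u(x) ≠ 0`; `𝒢u(x) = 1` if `u(x) = 0` and some neighbor is in state `1`;
`𝒢u(x) = 0` otherwise. -/
open Classical in
noncomputable def ghUpdate {V : Type*} (n : ℕ) (G : SimpleGraph V) (u : V → ZMod n) :
    V → ZMod n :=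
  fun x => if u x = 0 then (if ∃ y, G.Adj x y ∧ u y = 1 then 1 else 0) else u x + 1

theorem stmt_18 {V : Type*} [Fintype V] (n : ℕ) (hn : 2 ≤ n) (G : SimpleGraph V)
    (u₀ : V → ZMod n) (x : V) (T : ℕ)
    (hper : ∀ t, T ≤ t → (ghUpdate n G)^[t + n] u₀ x = (ghUpdate n G)^[t] u₀ x)
    (hT : (ghUpdate n G)^[T] u₀ x ≠ 0) :
    ∀ t, T ≤ t → (ghUpdate n G)^[t + 1] u₀ x = (ghUpdate n G)^[t] u₀ x + 1 := by
  haveI : Fact (1 < n) := ⟨hn⟩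
  set f : ℕ → ZMod n := fun t => (ghUpdate n G)^[t] u₀ x with hfdef
  have one_ne : (1 : ZMod n) ≠ 0 := one_ne_zero
  -- step lemma
  have step : ∀ t, f (t + 1) = f t + 1 ∨ (f t = 0 ∧ f (t + 1) = 0) := by
    intro t
    have he : f (t + 1) = ghUpdate n G ((ghUpdate n G)^[t] u₀) x := by
      simp [hfdef, Function.iterate_succ_apply']
    have hft : f t = (ghUpdate n G)^[t] u₀ x := rfl
    have key : ∀ u : V → ZMod n, ghUpdate n G u x = u x + 1 ∨ (u x = 0 ∧ ghUpdate n G u x = 0) := by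
      intro u
      by_cases h0 : u x = 0
      · by_cases hy : ∃ y, G.Adj x y ∧ u y = 1
        · left; simp [ghUpdate, h0, hy]
        · right; exact ⟨h0, by simp [ghUpdate, h0, hy]⟩
      · left; simp [ghUpdate, h0]
    rw [he, hft]
    exact key _
  intro t ht
  by_contra hadv
  -- increments
  set a : ℕ → ℕ := fun s => if f (s + 1) = f s + 1 then 1 else 0 with hadef
  have ha01 : ∀ s, a s ≤ 1 := by intro s; simp [hadef]; split <;> simp
  have hstuck : ∀ s, a s = 0 → f s = 0 ∧ f (s + 1) = 0 := by
    intro s hs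
    rcases step s with h | h
    · simp [hadef, h] at hs
    · exact h
  have hat : a t = 0 := by simp [hadef, hadv]; exact hadv
  have sumf : ∀ m, f (t + m) = f t + ((∑ s ∈ Finset.range m, a (t + s) : ℕ) : ZMod n) := by
    intro m
    induction m with
    | zero => simp
    | succ m ih =>
      rcases step (t + m) with h | h
      · have : t + (m + 1) = (t + m) + 1 := by ring
        rw [this, h, ih, Finset.sum_range_succ]
        have ham : a (t + m) = 1 := by simp [hadef, h]
        push_cast [ham]
        ring
      · have : t + (m + 1) = (t + m) + 1 := by ring
        rw [this, h.2]
        have ham : a (t + m) = 0 := by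
          have hne : ¬ f (t + m + 1) = f (t + m) + 1 := by
            rw [h.1, h.2, zero_add]
            exact fun h' => one_ne h'.symm
          simp [hadef, hne]
        rw [← h.1, ih, Finset.sum_range_succ, ham]
        push_cast
        ring
  have hpert : f (t + n) = f t := hper t ht
  have hsum0 : ((∑ s ∈ Finset.range n, a (t + s) : ℕ) : ZMod n) = 0 := by
    have := sumf n
    rw [hpert] at this
    have := (left_eq_add).mp this
    exact this
  have hdvd : n ∣ ∑ s ∈ Finset.range n, a (t + s) := by
    exact (ZMod.natCast_eq_zero_iff _ _).mp hsum0
  -- sum is < n since a t = 0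
  have hlt : ∑ s ∈ Finset.range n, a (t + s) < n := by
    obtain ⟨m, hm⟩ : ∃ m, n = m + 1 := ⟨n - 1, by omega⟩
    subst hm
    rw [Finset.sum_range_succ']
    simp only [add_zero, hat]
    have hb : ∑ s ∈ Finset.range m, a (t + (s + 1)) ≤ m * 1 := by
      calc ∑ s ∈ Finset.range m, a (t + (s + 1))
          ≤ ∑ s ∈ Finset.range m, 1 := Finset.sum_le_sum (fun i _ => ha01 _)
        _ = m * 1 := by simp [mul_comm]
    omega
  have hzero : ∑ s ∈ Finset.range n, a (t + s) = 0 :=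
    Nat.eq_zero_of_dvd_of_lt hdvd hlt
  have hall0 : ∀ s < n, a (t + s) = 0 := by
    intro s hs
    have := Finset.sum_eq_zero_iff.mp hzero s (Finset.mem_range.mpr hs)
    exact this
  have hfzero : ∀ s ≤ n, f (t + s) = 0 := by
    intro s hs
    rcases Nat.lt_or_ge s n with h | h
    · exact (hstuck _ (hall0 s h)).1
    · have ht0 : f t = 0 := by
        have := (hstuck _ (hall0 0 (by omega))).1
        simpa using this
      have hsn : s = n := le_antisymm hs h
      rw [hsn, hpert]
      exact ht0
  -- periodicity from T: f (T + k*n) = f T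
  have hkper : ∀ k, f (T + k * n) = f T := by
    intro k
    induction k with
    | zero => simp
    | succ k ih =>
      have : T + (k + 1) * n = (T + k * n) + n := by ring
      rw [this]
      exact (hper (T + k * n) (Nat.le_add_right _ _)).trans ih
  -- find multiple in the window
  set d : ℕ := t - T with hd
  set q : ℕ := (d + (n - 1)) / n with hq
  have h1 : q * n ≤ d + (n - 1) := Nat.div_mul_le_self _ _
  have h2 : d + (n - 1) < q * n + n := by
    have hdm : q * n + (d + (n - 1)) % n = d + (n - 1) := by
      rw [hq, mul_comm]
      exact Nat.div_add_mod _ _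
    have hr : (d + (n - 1)) % n < n := Nat.mod_lt _ (by omega)
    omega
  have hwin : d ≤ q * n ∧ q * n ≤ d + n := by omega
  have heqT : T + q * n = t + (q * n - d) := by omega
  have hle : q * n - d ≤ n := by omega
  have : f T ≠ 0 := hT
  apply this
  rw [← hkper q, heqT]
  exact hfzero _ hle
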